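/- Let (uₙ) be a sequence in H^s_0(Ω) such that ‖uₙ‖_q ≤ C for some q with (p−2)N/(2s) < q < p < 2*_s, and such that ‖uₙ‖² ≤ C(1 + ‖uₙ‖₁ + ‖uₙ‖_p^p) for all n. Then (uₙ) is bounded in H^s_0(Ω). -/

import Mathlib

open MeasureTheory

/-- The Gagliardo bilinear form. -/
noncomputable def gform (N : ℕ) (s : ℝ) (u v : EuclideanSpace ℝ (Fin N) → ℝ) : ℝ :=
  ∫ z : EuclideanSpace ℝ (Fin N) × EuclideanSpace ℝ (Fin N),
    ((u z.1 - u z.2) * (v z.1 - v z.2)) / ‖z.1 - z.2‖ ^ ((N : ℝ) + 2 * s)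

/-- Membership in the fractional Sobolev space `H^s_0(Ω)`. -/
def MemHs0 (N : ℕ) (s : ℝ) (Ω : Set (EuclideanSpace ℝ (Fin N)))
    (u : EuclideanSpace ℝ (Fin N) → ℝ) : Prop :=
  MemLp u 2 (volume : Measure (EuclideanSpace ℝ (Fin N))) ∧
  (∀ᵐ x ∂(volume : Measure (EuclideanSpace ℝ (Fin N))), x ∉ Ω → u x = 0) ∧
  Integrable (fun z : EuclideanSpace ℝ (Fin N) × EuclideanSpace ℝ (Fin N) =>
    (u z.1 - u z.2) ^ 2 / ‖z.1 - z.2‖ ^ ((N : ℝ) + 2 * s)) volume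


/-- The `L^r(Ω)` norm. -/
noncomputable def lnorm (N : ℕ) (Ω : Set (EuclideanSpace ℝ (Fin N))) (r : ℝ)
    (u : EuclideanSpace ℝ (Fin N) → ℝ) : ℝ :=
  (∫ x in Ω, |u x| ^ r) ^ (1 / r)
namespace Stmt8Aux

/-- Absolute value of the truncation. -/
lemma abs_trunc {k : ℝ} (hk : 0 ≤ k) (v : ℝ) :
    |max (-k) (min v k)| = min |v| k := by
  rcases le_total 0 v with hv | hv
  · have h0 : 0 ≤ min v k := le_min hv hk
    rw [max_eq_right ((neg_nonpos.2 hk).trans h0), abs_of_nonneg h0, abs_of_nonneg hv]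
  · have h1 : min v k = v := min_eq_left (hv.trans hk)
    rw [h1]
    rcases le_total (-k) v with h2 | h2
    · rw [max_eq_right h2, abs_of_nonpos hv]
      exact (min_eq_left (by linarith)).symm
    · rw [max_eq_left h2, abs_neg, abs_of_nonneg hk, abs_of_nonpos hv]
      exact (min_eq_right (by linarith)).symm

/-- Truncation is 1-Lipschitz. -/
lemma trunc_lip (k a b : ℝ) :
    |max (-k) (min a k) - max (-k) (min b k)| ≤ |a - b| := by
  rw [max_comm (-k) (min a k), max_comm (-k) (min b k)]
  refine (abs_max_sub_max_le_abs _ _ _).trans ?_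
  have := abs_min_sub_min_le_max a k b k
  simpa using this

end Stmt8Aux

set_option maxHeartbeats 1000000 in
/-- If `(uₙ) ⊆ H^s_0(Ω)` is bounded in `L^q(Ω)` with `(p−2)N/(2s) < q < p < 2*_s` and
satisfies `‖uₙ‖² ≤ C(1 + ‖uₙ‖₁ + ‖uₙ‖_p^p)`, then `(uₙ)` is bounded in `H^s_0(Ω)`. -/
theorem stmt_8 (N : ℕ) (hN : 1 < N) (s : ℝ) (hs : s ∈ Set.Ioo (0 : ℝ) 1)
    (hNs : 2 * s < (N : ℝ))
    (Ω : Set (EuclideanSpace ℝ (Fin N))) (hΩ : Bornology.IsBounded Ω)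
    (hΩm : MeasurableSet Ω)
    (p q : ℝ) (hp2 : 2 < p) (hqlo : (p - 2) * (N : ℝ) / (2 * s) < q) (hqp : q < p)
    (hpc : p < 2 * (N : ℝ) / ((N : ℝ) - 2 * s))
    -- continuous embeddings H^s_0(Ω) ↪ L^r(Ω), 1 ≤ r ≤ 2*_s
    (hemb : ∀ r : ℝ, 1 ≤ r → r ≤ 2 * (N : ℝ) / ((N : ℝ) - 2 * s) →
      ∃ S > (0 : ℝ), ∀ u : EuclideanSpace ℝ (Fin N) → ℝ, MemHs0 N s Ω u →
        lnorm N Ω r u ≤ S * Real.sqrt (gform N s u u))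
    (U : ℕ → EuclideanSpace ℝ (Fin N) → ℝ) (hU : ∀ n, MemHs0 N s Ω (U n))
    (C : ℝ) (hC : 0 < C)
    -- (uₙ) bounded in L^q(Ω)
    (hLq : ∀ n, lnorm N Ω q (U n) ≤ C)
    -- ‖uₙ‖² ≤ C(1 + ‖uₙ‖₁ + ‖uₙ‖_p^p)
    (hkey : ∀ n, gform N s (U n) (U n) ≤
      C * (1 + lnorm N Ω 1 (U n) + (lnorm N Ω p (U n)) ^ p)) :
    ∃ C' : ℝ, ∀ n, Real.sqrt (gform N s (U n) (U n)) ≤ C' := by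
  classical
  obtain ⟨hs0, hs1⟩ := hs
  have hN0 : (0:ℝ) < N := by exact_mod_cast Nat.zero_lt_of_lt hN
  have hs2 : (0:ℝ) < 2 * s := by linarith
  have hNs' : (0:ℝ) < (N : ℝ) - 2 * s := by linarith
  set r2 : ℝ := 2 * (N : ℝ) / ((N : ℝ) - 2 * s) with hr2def
  have hr2gt2 : (2:ℝ) < r2 := by
    rw [hr2def, lt_div_iff₀ hNs']; linarith only [hs0, hN0]
  have hr2pos : (0:ℝ) < r2 := by linarith
  have hr2ge1 : (1:ℝ) ≤ r2 := by linarith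
  have hp0 : (0:ℝ) < p := by linarith
  have hq0 : (0:ℝ) < q := lt_trans (div_pos (mul_pos (by linarith) hN0) hs2) hqlo
  have hpr2 : p < r2 := hpc
  -- exponents
  have hinv1 : 1 / r2 < 1 / p := one_div_lt_one_div_of_lt hp0 hpr2
  have hinv2 : 1 / p < 1 / q := one_div_lt_one_div_of_lt hq0 hqp
  have hden : 0 < 1 / q - 1 / r2 := by linarith
  set τ : ℝ := (1/q - 1/p) / (1/q - 1/r2) with hτdef
  have hτ0 : 0 < τ := div_pos (by linarith) hden
  have hτ1 : τ < 1 := (div_lt_one hden).2 (by linarith)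
  set a : ℝ := p * (1 - τ) with hadef
  set b : ℝ := p * τ with hbdef
  have ha0 : 0 < a := mul_pos hp0 (by linarith)
  have hb0 : 0 < b := mul_pos hp0 hτ0
  have hab : a + b = p := by rw [hadef, hbdef]; ring
  have hτeq : τ * (1/q - 1/r2) = 1/q - 1/p := by
    rw [hτdef]; exact div_mul_cancel₀ _ hden.ne'
  have h1p : (1 - τ)/q + τ/r2 = 1/p := by
    have e : (1 - τ)/q + τ/r2 = 1/q - τ * (1/q - 1/r2) := by ring
    rw [e, hτeq]; ring
  have habq : a / q + b / r2 = 1 := by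
    have e : a / q + b / r2 = p * ((1 - τ)/q + τ/r2) := by rw [hadef, hbdef]; ring
    rw [e, h1p]; field_simp
  have haq : a < q := by
    have h : (1 - τ) / q < 1 / p := by
      have hpos : 0 < τ / r2 := div_pos hτ0 hr2pos
      linarith [h1p]
    have h' := (div_lt_div_iff₀ hq0 hp0).1 h
    rw [hadef]; linarith only [h']
  set P : ℝ := q / a with hPdef
  set Q : ℝ := r2 / b with hQdef
  have hP1 : 1 < P := by rw [hPdef]; exact (one_lt_div ha0).2 haq
  have hPQ : Real.HolderConjugate P Q := by
    refine Real.holderConjugate_iff.2 ⟨hP1, ?_⟩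
    rw [hPdef, hQdef, inv_div, inv_div]; exact habq
  have haP : a * P = q := by rw [hPdef]; field_simp
  have hbQ : b * Q = r2 := by rw [hQdef]; field_simp
  have hqP : q * (1 / P) = a := by rw [hPdef]; field_simp
  have hr2Q : r2 * (1 / Q) = b := by rw [hQdef]; field_simp
  have hP0 : (0:ℝ) ≤ 1 / P := by positivity
  have hQ0 : (0:ℝ) ≤ 1 / Q := by
    have := hPQ.symm.lt
    positivity
  -- b < 2
  have hr2inv : 1 / r2 = ((N:ℝ) - 2*s) / (2 * N) := by rw [hr2def, one_div_div]
  have hqlo' : (p - 2) * (N:ℝ) < q * (2 * s) := (div_lt_iff₀ hs2).1 hqlo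
  have hb2 : b < 2 := by
    have e4 : (p - 2)/q < 2*s/(N:ℝ) := by
      rw [div_lt_div_iff₀ hq0 hN0]; linarith only [hqlo']
    have e3 : ((N:ℝ) - 2*s)/N + 2*s/N = 1 := by field_simp; ring
    have e5 : (p - 2)/q = p/q - 2/q := by ring
    rw [hbdef, hτdef, ← mul_div_assoc, div_lt_iff₀ hden, hr2inv]
    have e1 : p * (1/q - 1/p) = p / q - 1 := by field_simp
    have e2 : 2 * (1/q - ((N:ℝ)-2*s)/(2*N)) = 2/q - ((N:ℝ)-2*s)/N := by
      field_simp
    rw [e1, e2]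
    linarith only [e4, e3, e5]
  -- embeddings
  obtain ⟨S2, hS2, hembS2⟩ := hemb r2 hr2ge1 le_rfl
  obtain ⟨S1, hS1, hembS1⟩ := hemb 1 le_rfl hr2ge1
  -- constants
  set K : ℝ := C * (1 + S1 + C ^ a * S2 ^ b) + 1 with hKdef
  have ht1 : (0:ℝ) ≤ C ^ a * S2 ^ b :=
    mul_nonneg (Real.rpow_nonneg hC.le _) (Real.rpow_nonneg hS2.le _)
  have ht2 : (0:ℝ) ≤ C * S1 := mul_nonneg hC.le hS1.le
  have ht3 : (0:ℝ) ≤ C * (C ^ a * S2 ^ b) := mul_nonneg hC.le ht1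
  have hK1 : (1:ℝ) ≤ K := by rw [hKdef]; linarith only [ht2, ht3, hC.le]
  have hK0 : (0:ℝ) < K := by linarith only [hK1]
  have c1 : C ≤ K := by rw [hKdef]; linarith only [ht2, ht3]
  have c2 : C * S1 ≤ K := by rw [hKdef]; linarith only [hC.le, ht3]
  have c3 : C * (C ^ a * S2 ^ b) ≤ K := by rw [hKdef]; linarith only [hC.le, ht2]
  set m : ℝ := max 1 b with hmdef
  have hm1 : (1:ℝ) ≤ m := le_max_left _ _
  have hm2 : m < 2 := max_lt one_lt_two hb2
  have h2m : (0:ℝ) < 2 - m := by linarith only [hm2]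
  refine ⟨max 1 ((3 * K) ^ (1 / (2 - m))), fun n => ?_⟩
  obtain ⟨hu2, hu0, huG⟩ := hU n
  set u : EuclideanSpace ℝ (Fin N) → ℝ := U n with hudef
  set X : ℝ := Real.sqrt (gform N s u u) with hXdef
  have hX0 : 0 ≤ X := Real.sqrt_nonneg _
  have hgnn : 0 ≤ gform N s u u := by
    rw [gform]
    apply integral_nonneg
    intro z
    exact div_nonneg (mul_self_nonneg _) (Real.rpow_nonneg (norm_nonneg _) _)
  have hX2 : X ^ 2 = gform N s u u := Real.sq_sqrt hgnn
  have huG' : Integrable (fun z : EuclideanSpace ℝ (Fin N) × EuclideanSpace ℝ (Fin N) =>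
      (u z.1 - u z.2) * (u z.1 - u z.2) / ‖z.1 - z.2‖ ^ ((N:ℝ) + 2*s)) volume := by
    have h := huG
    simp only [pow_two] at h
    exact h
  have hum : AEMeasurable u (volume : Measure (EuclideanSpace ℝ (Fin N))) :=
    hu2.aestronglyMeasurable.aemeasurable
  -- truncations
  set T : ℕ → EuclideanSpace ℝ (Fin N) → ℝ :=
    fun k x => max (-(k:ℝ)) (min (u x) (k:ℝ)) with hTdef
  have hTabs : ∀ (k : ℕ) x, |T k x| = min |u x| (k:ℝ) := fun k x =>
    Stmt8Aux.abs_trunc (Nat.cast_nonneg k) (u x)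
  have hTm : ∀ k, AEMeasurable (T k) volume := fun k =>
    aemeasurable_const.max (hum.min aemeasurable_const)
  have hTsm : ∀ k, AEStronglyMeasurable (T k) volume := fun k => (hTm k).aestronglyMeasurable
  have hTlip : ∀ (k : ℕ) (z : EuclideanSpace ℝ (Fin N) × EuclideanSpace ℝ (Fin N)),
      |T k z.1 - T k z.2| ≤ |u z.1 - u z.2| := fun k z =>
    Stmt8Aux.trunc_lip (k:ℝ) (u z.1) (u z.2)
  have hTmem : ∀ k, MemHs0 N s Ω (T k) := by
    intro k
    refine ⟨?_, ?_, ?_⟩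
    · refine hu2.of_le (hTsm k) ?_
      filter_upwards with x
      rw [Real.norm_eq_abs, Real.norm_eq_abs, hTabs k x]
      exact min_le_left _ _
    · filter_upwards [hu0] with x hx hxΩ
      have h0 : u x = 0 := hx hxΩ
      show max (-(k:ℝ)) (min (u x) (k:ℝ)) = 0
      rw [h0, min_eq_left (Nat.cast_nonneg k), max_eq_right (neg_nonpos.2 (Nat.cast_nonneg k))]
    · have hT1 : AEStronglyMeasurable (fun z : EuclideanSpace ℝ (Fin N) × EuclideanSpace ℝ (Fin N)
          => T k z.1) volume := by
        rw [MeasureTheory.Measure.volume_eq_prod]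
        exact (hTsm k).comp_fst
      have hT2 : AEStronglyMeasurable (fun z : EuclideanSpace ℝ (Fin N) × EuclideanSpace ℝ (Fin N)
          => T k z.2) volume := by
        rw [MeasureTheory.Measure.volume_eq_prod]
        exact (hTsm k).comp_snd
      have hd : Measurable (fun z : EuclideanSpace ℝ (Fin N) × EuclideanSpace ℝ (Fin N) =>
          ‖z.1 - z.2‖ ^ ((N:ℝ) + 2*s)) :=
        ((measurable_fst.sub measurable_snd).norm).pow measurable_const
      refine huG.mono' ?_ ?_
      · exact (((hT1.aemeasurable.sub hT2.aemeasurable).pow aemeasurable_const).div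
          hd.aemeasurable).aestronglyMeasurable
      · filter_upwards with z
        have hnum : (T k z.1 - T k z.2)^2 ≤ (u z.1 - u z.2)^2 := by
          calc (T k z.1 - T k z.2)^2 = |T k z.1 - T k z.2|^2 := (sq_abs _).symm
            _ ≤ |u z.1 - u z.2|^2 := by
                apply pow_le_pow_left₀ (abs_nonneg _) (hTlip k z)
            _ = (u z.1 - u z.2)^2 := sq_abs _
        have hdnn : (0:ℝ) ≤ ‖z.1 - z.2‖ ^ ((N:ℝ) + 2*s) := Real.rpow_nonneg (norm_nonneg _) _
        rw [Real.norm_eq_abs, abs_of_nonneg (div_nonneg (sq_nonneg _) hdnn)]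
        rw [div_eq_mul_inv, div_eq_mul_inv]
        exact mul_le_mul_of_nonneg_right hnum (inv_nonneg.2 hdnn)
  have hgT : ∀ k, gform N s (T k) (T k) ≤ gform N s u u := by
    intro k
    rw [gform, gform]
    apply integral_mono_of_nonneg
    · filter_upwards with z
      exact div_nonneg (mul_self_nonneg _) (Real.rpow_nonneg (norm_nonneg _) _)
    · exact huG'
    · filter_upwards with z
      have hdnn : (0:ℝ) ≤ ‖z.1 - z.2‖ ^ ((N:ℝ) + 2*s) := Real.rpow_nonneg (norm_nonneg _) _
      rw [div_eq_mul_inv, div_eq_mul_inv]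
      apply mul_le_mul_of_nonneg_right _ (inv_nonneg.2 hdnn)
      calc (T k z.1 - T k z.2) * (T k z.1 - T k z.2)
          = |T k z.1 - T k z.2| * |T k z.1 - T k z.2| := (abs_mul_abs_self _).symm
        _ ≤ |u z.1 - u z.2| * |u z.1 - u z.2| :=
            mul_self_le_mul_self (abs_nonneg _) (hTlip k z)
        _ = (u z.1 - u z.2) * (u z.1 - u z.2) := abs_mul_abs_self _
  have hTbound : ∀ k, lnorm N Ω r2 (T k) ≤ S2 * X := fun k =>
    (hembS2 (T k) (hTmem k)).trans
      (mul_le_mul_of_nonneg_left (Real.sqrt_le_sqrt (hgT k)) hS2.le)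
  have hIk : ∀ k : ℕ, (∫ x in Ω, |T k x| ^ r2) ≤ (S2 * X) ^ r2 := by
    intro k
    have h1 : (0:ℝ) ≤ ∫ x in Ω, |T k x| ^ r2 :=
      integral_nonneg fun x => Real.rpow_nonneg (abs_nonneg _) _
    have h2 := hTbound k
    rw [lnorm] at h2
    calc (∫ x in Ω, |T k x| ^ r2)
        = ((∫ x in Ω, |T k x| ^ r2) ^ (1/r2)) ^ r2 := by
          rw [← Real.rpow_mul h1, one_div_mul_cancel hr2pos.ne', Real.rpow_one]
      _ ≤ (S2 * X) ^ r2 := Real.rpow_le_rpow (Real.rpow_nonneg h1 _) h2 hr2pos.le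
  have hIk' : ∀ k : ℕ, (∫⁻ x in Ω, ENNReal.ofReal (|T k x| ^ r2)) ≤
      ENNReal.ofReal ((S2 * X) ^ r2) := by
    intro k
    have hint : IntegrableOn (fun x => |T k x| ^ r2) Ω volume := by
      refine Integrable.mono' (g := fun _ => (k:ℝ) ^ r2)
        (integrableOn_const hΩ.measure_lt_top.ne) ?_ ?_
      · have h1 : AEStronglyMeasurable (fun x => ‖T k x‖ ^ r2) (volume.restrict Ω) :=
          ((((hTsm k).norm.aemeasurable).pow aemeasurable_const).aestronglyMeasurable).restrict
        exact h1.congr (Filter.Eventually.of_forall fun x => by simp only [Real.norm_eq_abs])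
      · filter_upwards with x
        rw [Real.norm_eq_abs, abs_of_nonneg (Real.rpow_nonneg (abs_nonneg _) _)]
        refine Real.rpow_le_rpow (abs_nonneg _) ?_ hr2pos.le
        rw [hTabs k x]; exact min_le_right _ _
    rw [← ofReal_integral_eq_lintegral_ofReal hint
      (Filter.Eventually.of_forall fun x => Real.rpow_nonneg (abs_nonneg _) _)]
    exact ENNReal.ofReal_le_ofReal (hIk k)
  have hFk : (∫⁻ x in Ω, ENNReal.ofReal (|u x| ^ r2)) ≤ ENNReal.ofReal ((S2 * X) ^ r2) := by
    have htend : Filter.Tendsto (fun k : ℕ => ∫⁻ x in Ω, ENNReal.ofReal (|T k x| ^ r2))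
        Filter.atTop (nhds (∫⁻ x in Ω, ENNReal.ofReal (|u x| ^ r2))) := by
      apply lintegral_tendsto_of_tendsto_of_monotone
      · intro k
        have h1 : AEMeasurable (fun x => ENNReal.ofReal (‖T k x‖ ^ r2)) (volume.restrict Ω) :=
          ((((hTsm k).norm.aemeasurable).pow aemeasurable_const).ennreal_ofReal).restrict
        exact h1.congr (Filter.Eventually.of_forall fun x => by simp only [Real.norm_eq_abs])
      · filter_upwards with x
        intro k l hkl
        apply ENNReal.ofReal_le_ofReal
        refine Real.rpow_le_rpow (abs_nonneg _) ?_ hr2pos.le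
        rw [hTabs k x, hTabs l x]
        exact min_le_min le_rfl (Nat.cast_le.2 hkl)
      · filter_upwards with x
        have hev : ∀ᶠ k : ℕ in Filter.atTop,
            ENNReal.ofReal (|T k x| ^ r2) = ENNReal.ofReal (|u x| ^ r2) := by
          filter_upwards [Filter.eventually_ge_atTop ⌈|u x|⌉₊] with k hk
          rw [hTabs k x, min_eq_left ((Nat.le_ceil _).trans (Nat.cast_le.2 hk))]
        exact Filter.Tendsto.congr' (hev.mono fun k hk => hk.symm) tendsto_const_nhds
    exact le_of_tendsto' htend hIk'
  have hUfin : (∫⁻ x in Ω, ENNReal.ofReal (|u x| ^ r2)) < ⊤ :=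
    lt_of_le_of_lt hFk ENNReal.ofReal_lt_top
  have hIr : ∀ r : ℝ, 0 < r → r ≤ r2 → IntegrableOn (fun x => |u x| ^ r) Ω volume := by
    intro r hr hrle
    constructor
    · have h1 : AEStronglyMeasurable (fun x => ‖u x‖ ^ r) (volume.restrict Ω) :=
        ((hu2.aestronglyMeasurable.norm.aemeasurable.pow
          aemeasurable_const).aestronglyMeasurable).restrict
      exact h1.congr (Filter.Eventually.of_forall fun x => by simp only [Real.norm_eq_abs])
    · rw [hasFiniteIntegral_iff_ofReal
        (Filter.Eventually.of_forall fun x => Real.rpow_nonneg (abs_nonneg _) _)]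
      calc (∫⁻ x in Ω, ENNReal.ofReal (|u x| ^ r))
          ≤ ∫⁻ x in Ω, (1 + ENNReal.ofReal (|u x| ^ r2)) := by
            apply lintegral_mono
            intro x
            rcases le_total |u x| 1 with h | h
            · have hle : |u x| ^ r ≤ 1 := Real.rpow_le_one (abs_nonneg _) h hr.le
              calc ENNReal.ofReal (|u x| ^ r) ≤ 1 := by
                    simpa using ENNReal.ofReal_le_ofReal hle
                _ ≤ _ := le_self_add
            · have hle : |u x| ^ r ≤ |u x| ^ r2 :=
                Real.rpow_le_rpow_of_exponent_le h hrle
              exact (ENNReal.ofReal_le_ofReal hle).trans le_add_self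
        _ = volume Ω + ∫⁻ x in Ω, ENNReal.ofReal (|u x| ^ r2) := by
            rw [lintegral_add_left measurable_const, lintegral_one,
              Measure.restrict_apply_univ]
        _ < ⊤ := ENNReal.add_lt_top.2 ⟨hΩ.measure_lt_top, hUfin⟩
  have hIq := hIr q hq0 (by linarith)
  have hIp := hIr p hp0 (by linarith)
  have hql : (∫ x in Ω, |u x| ^ q) ≤ C ^ q := by
    have h1 : (0:ℝ) ≤ ∫ x in Ω, |u x| ^ q :=
      integral_nonneg fun x => Real.rpow_nonneg (abs_nonneg _) _
    have h2 := hLq n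
    rw [← hudef, lnorm] at h2
    calc (∫ x in Ω, |u x| ^ q)
        = ((∫ x in Ω, |u x| ^ q) ^ (1/q)) ^ q := by
          rw [← Real.rpow_mul h1, one_div_mul_cancel hq0.ne', Real.rpow_one]
      _ ≤ C ^ q := Real.rpow_le_rpow (Real.rpow_nonneg h1 _) h2 hq0.le
  have hqlint : (∫⁻ x in Ω, ENNReal.ofReal (|u x| ^ q)) ≤ ENNReal.ofReal (C ^ q) := by
    rw [← ofReal_integral_eq_lintegral_ofReal hIq
      (Filter.Eventually.of_forall fun x => Real.rpow_nonneg (abs_nonneg _) _)]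
    exact ENNReal.ofReal_le_ofReal hql
  -- Hölder interpolation
  have hSX0 : (0:ℝ) ≤ S2 * X := mul_nonneg hS2.le hX0
  have hpq_int : (∫⁻ x in Ω, ENNReal.ofReal (|u x| ^ p)) ≤
      ENNReal.ofReal (C ^ a * (S2 * X) ^ b) := by
    set g : EuclideanSpace ℝ (Fin N) → ENNReal := fun x => ENNReal.ofReal |u x| with hgdef
    have hg : AEMeasurable g (volume.restrict Ω) := by
      have h1 : AEMeasurable (fun x => ENNReal.ofReal ‖u x‖) (volume.restrict Ω) :=
        (hu2.aestronglyMeasurable.norm.aemeasurable.ennreal_ofReal).restrict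
      exact h1.congr (Filter.Eventually.of_forall fun x => by simp only [Real.norm_eq_abs, hgdef])
    have h := ENNReal.lintegral_mul_le_Lp_mul_Lq (volume.restrict Ω) hPQ
      (f := fun x => g x ^ a) (g := fun x => g x ^ b)
      (hg.pow aemeasurable_const) (hg.pow aemeasurable_const)
    have e1 : ∀ x : EuclideanSpace ℝ (Fin N),
        g x ^ a * g x ^ b = ENNReal.ofReal (|u x| ^ p) := by
      intro x
      rw [← ENNReal.rpow_add_of_nonneg _ _ ha0.le hb0.le, hab, hgdef,
        ENNReal.ofReal_rpow_of_nonneg (abs_nonneg _) hp0.le]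
    have e2 : ∀ x : EuclideanSpace ℝ (Fin N),
        (g x ^ a) ^ P = ENNReal.ofReal (|u x| ^ q) := by
      intro x
      rw [← ENNReal.rpow_mul, haP, hgdef,
        ENNReal.ofReal_rpow_of_nonneg (abs_nonneg _) hq0.le]
    have e3 : ∀ x : EuclideanSpace ℝ (Fin N),
        (g x ^ b) ^ Q = ENNReal.ofReal (|u x| ^ r2) := by
      intro x
      rw [← ENNReal.rpow_mul, hbQ, hgdef,
        ENNReal.ofReal_rpow_of_nonneg (abs_nonneg _) hr2pos.le]
    calc (∫⁻ x in Ω, ENNReal.ofReal (|u x| ^ p))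
        = ∫⁻ x in Ω, ((fun y => g y ^ a) * (fun y => g y ^ b)) x := by
          apply lintegral_congr
          intro x
          simp only [Pi.mul_apply]
          exact (e1 x).symm
      _ ≤ (∫⁻ x in Ω, (g x ^ a) ^ P) ^ (1/P) * (∫⁻ x in Ω, (g x ^ b) ^ Q) ^ (1/Q) := h
      _ = (∫⁻ x in Ω, ENNReal.ofReal (|u x| ^ q)) ^ (1/P) *
          (∫⁻ x in Ω, ENNReal.ofReal (|u x| ^ r2)) ^ (1/Q) := by
          rw [lintegral_congr e2, lintegral_congr e3]
      _ ≤ (ENNReal.ofReal (C ^ q)) ^ (1/P) * (ENNReal.ofReal ((S2 * X) ^ r2)) ^ (1/Q) :=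
          mul_le_mul' (ENNReal.rpow_le_rpow hqlint hP0) (ENNReal.rpow_le_rpow hFk hQ0)
      _ = ENNReal.ofReal (C ^ a * (S2 * X) ^ b) := by
          rw [ENNReal.ofReal_rpow_of_nonneg (Real.rpow_nonneg hC.le _) hP0,
            ENNReal.ofReal_rpow_of_nonneg (Real.rpow_nonneg hSX0 _) hQ0,
            ← Real.rpow_mul hC.le, ← Real.rpow_mul hSX0, hqP, hr2Q,
            ← ENNReal.ofReal_mul (Real.rpow_nonneg hC.le _)]
  have hlpbound : (lnorm N Ω p u) ^ p ≤ C ^ a * S2 ^ b * X ^ b := by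
    have h1 : (0:ℝ) ≤ ∫ x in Ω, |u x| ^ p :=
      integral_nonneg fun x => Real.rpow_nonneg (abs_nonneg _) _
    have h2 : (∫ x in Ω, |u x| ^ p) ≤ C ^ a * (S2 * X) ^ b := by
      have h := hpq_int
      rw [← ofReal_integral_eq_lintegral_ofReal hIp
        (Filter.Eventually.of_forall fun x => Real.rpow_nonneg (abs_nonneg _) _)] at h
      exact (ENNReal.ofReal_le_ofReal_iff
        (mul_nonneg (Real.rpow_nonneg hC.le _) (Real.rpow_nonneg hSX0 _))).1 h
    have h3 : (lnorm N Ω p u) ^ p = ∫ x in Ω, |u x| ^ p := by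
      rw [lnorm, ← Real.rpow_mul h1, one_div_mul_cancel hp0.ne', Real.rpow_one]
    rw [h3]
    calc (∫ x in Ω, |u x| ^ p) ≤ C ^ a * (S2 * X) ^ b := h2
      _ = C ^ a * S2 ^ b * X ^ b := by rw [Real.mul_rpow hS2.le hX0]; ring
  have hl1 : lnorm N Ω 1 u ≤ S1 * X := hembS1 u ⟨hu2, hu0, huG⟩
  have hkn := hkey n
  rw [← hudef] at hkn
  have hXb0 : (0:ℝ) ≤ X ^ b := Real.rpow_nonneg hX0 _
  have hl10 : 0 ≤ lnorm N Ω 1 u := by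
    rw [lnorm]
    exact Real.rpow_nonneg (integral_nonneg fun x => Real.rpow_nonneg (abs_nonneg _) _) _
  have hX2' : X ^ 2 ≤ K * (1 + X + X ^ b) := by
    have h4 : gform N s u u ≤ C * (1 + S1 * X + C ^ a * S2 ^ b * X ^ b) := by
      refine hkn.trans ?_
      apply mul_le_mul_of_nonneg_left _ hC.le
      linarith only [hl1, hlpbound]
    rw [hX2]
    calc gform N s u u ≤ C * (1 + S1 * X + C ^ a * S2 ^ b * X ^ b) := h4
      _ = C + (C * S1) * X + (C * (C ^ a * S2 ^ b)) * X ^ b := by ring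
      _ ≤ K + K * X + K * X ^ b :=
          add_le_add (add_le_add c1 (mul_le_mul_of_nonneg_right c2 hX0))
            (mul_le_mul_of_nonneg_right c3 hXb0)
      _ = K * (1 + X + X ^ b) := by ring
  -- conclude
  rcases le_total X 1 with h | h
  · exact h.trans (le_max_left _ _)
  · have hXpos : 0 < X := lt_of_lt_of_le one_pos h
    have hXb_m : X ^ b ≤ X ^ m := Real.rpow_le_rpow_of_exponent_le h (le_max_right _ _)
    have hX_m : X ≤ X ^ m := by
      calc X = X ^ (1:ℝ) := (Real.rpow_one X).symm
        _ ≤ X ^ m := Real.rpow_le_rpow_of_exponent_le h hm1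
    have h1_m : (1:ℝ) ≤ X ^ m := by
      calc (1:ℝ) = X ^ (0:ℝ) := (Real.rpow_zero X).symm
        _ ≤ X ^ m := Real.rpow_le_rpow_of_exponent_le h (by linarith)
    have hXm_pos : 0 < X ^ m := Real.rpow_pos_of_pos hXpos _
    have h2 : X ^ (2:ℝ) ≤ 3 * K * X ^ m := by
      have e : X ^ (2:ℝ) = X ^ (2:ℕ) := by
        rw [← Real.rpow_natCast X 2]; norm_num
      rw [e]
      calc X ^ (2:ℕ) ≤ K * (1 + X + X ^ b) := hX2'
        _ ≤ K * (3 * X ^ m) := by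
            apply mul_le_mul_of_nonneg_left _ hK0.le
            linarith only [h1_m, hX_m, hXb_m]
        _ = 3 * K * X ^ m := by ring
    have h3 : X ^ ((2:ℝ) - m) ≤ 3 * K := by
      rw [Real.rpow_sub hXpos, div_le_iff₀ hXm_pos]
      exact h2
    have h4 : X ≤ (3 * K) ^ (1 / (2 - m)) := by
      calc X = (X ^ ((2:ℝ) - m)) ^ (1 / (2 - m)) := by
            rw [← Real.rpow_mul hXpos.le, mul_one_div, div_self h2m.ne', Real.rpow_one]
        _ ≤ (3 * K) ^ (1 / (2 - m)) :=
            Real.rpow_le_rpow (Real.rpow_nonneg hXpos.le _) h3 (by positivity)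
    exact h4.trans (le_max_right _ _)
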